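/- For any simple graph G, if H is an even subgraph of G whose edge set has maximum cardinality among all even subgraphs of G, then the graph obtained from G by deleting the edges of H contains no cycle (i.e., G − E(H) is a forest). -/
import Mathlib

open SimpleGraph

private lemma trail_parity {V : Type*} [Fintype V] [DecidableEq V] {G : SimpleGraph V} {a b : V}
    (p : G.Walk a b) (w : V) : p.IsTrail →
    Even ((p.toSubgraph.neighborSet w).ncard
      + ((if w = a then 1 else 0) + (if w = b then 1 else 0))) := by
  induction p with
  | nil =>
    intro _
    simp only [Walk.toSubgraph, neighborSet_singletonSubgraph, Set.ncard_empty, zero_add]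
    split_ifs <;> simp
  | @cons u v b h q ih =>
    intro hp
    rw [Walk.isTrail_cons] at hp
    obtain ⟨hq, he⟩ := hp
    have ih' := ih hq
    have hd : Disjoint ((G.subgraphOfAdj h).neighborSet w) (q.toSubgraph.neighborSet w) := by
      rw [Set.disjoint_left]
      intro x hx1 hx2
      have hadj1 : (G.subgraphOfAdj h).Adj w x := hx1
      have hadj2 : q.toSubgraph.Adj w x := hx2
      rw [subgraphOfAdj_adj] at hadj1
      apply he
      rw [← Walk.mem_edges_toSubgraph, hadj1, Subgraph.mem_edgeSet]
      exact hadj2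
    have hcard : ((Walk.cons h q).toSubgraph.neighborSet w).ncard
        = ((G.subgraphOfAdj h).neighborSet w).ncard + (q.toSubgraph.neighborSet w).ncard := by
      rw [show (Walk.cons h q).toSubgraph = G.subgraphOfAdj h ⊔ q.toSubgraph from rfl,
        Subgraph.neighborSet_sup, Set.ncard_union_eq hd (Set.toFinite _) (Set.toFinite _)]
    have h1 : ((G.subgraphOfAdj h).neighborSet w).ncard
        = (if w = u then 1 else 0) + (if w = v then 1 else 0) := by
      rw [neighborSet_subgraphOfAdj]
      split_ifs with hu hv hv
      · exact absurd (hu ▸ hv : (u : V) = v) h.ne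
      · simp
      · simp
      · simp
    rw [hcard, h1]
    rw [Nat.even_iff] at ih' ⊢
    split_ifs at ih' ⊢ <;> omega

theorem maximum_even_subgraph_complement_acyclic
    {V : Type*} [Fintype V] [DecidableEq V] (G H : SimpleGraph V)
    (hle : H ≤ G)
    (heven : ∀ v : V, Even ((H.neighborSet v).ncard))
    (hmax : ∀ H' : SimpleGraph V, H' ≤ G → (∀ v : V, Even ((H'.neighborSet v).ncard)) →
      H'.edgeSet.ncard ≤ H.edgeSet.ncard) :
    (G \ H).IsAcyclic := by
  intro v p hp
  set C := p.toSubgraph with hC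
  have hCle : C.spanningCoe ≤ G \ H := C.spanningCoe_le
  have hH'le : H ⊔ C.spanningCoe ≤ G := sup_le hle (hCle.trans sdiff_le)
  have hnadj : ∀ w x, H.Adj w x → ¬ C.spanningCoe.Adj w x := by
    intro w x h1 h2
    exact ((hCle h2).2 h1)
  -- neighbor sets
  have hCnbhd : ∀ w, C.spanningCoe.neighborSet w = C.neighborSet w := fun w => rfl
  have hCeven : ∀ w, Even ((C.neighborSet w).ncard) := by
    intro w
    have := trail_parity p w hp.isTrail
    rcases Nat.even_add.mp this with hiff
    rcases eq_or_ne w v with h | h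
    · subst h
      simp only [if_pos rfl] at hiff
      exact hiff.mpr (by norm_num)
    · simp only [if_neg h] at hiff
      exact hiff.mpr (by norm_num)
  have heven' : ∀ w : V, Even (((H ⊔ C.spanningCoe).neighborSet w).ncard) := by
    intro w
    have hun : (H ⊔ C.spanningCoe).neighborSet w
        = H.neighborSet w ∪ C.spanningCoe.neighborSet w := by
      ext x; simp [mem_neighborSet]
    have hd : Disjoint (H.neighborSet w) (C.spanningCoe.neighborSet w) := by
      rw [Set.disjoint_left]
      intro x hx1 hx2
      exact hnadj w x hx1 hx2
    rw [hun, Set.ncard_union_eq hd (Set.toFinite _) (Set.toFinite _), hCnbhd]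
    exact (heven w).add (hCeven w)
  -- edge sets
  have hCedge : C.spanningCoe.edgeSet = C.edgeSet := by
    ext e
    induction e using Sym2.ind with
    | _ x y => simp [mem_edgeSet, Subgraph.mem_edgeSet]
  have hedge : (H ⊔ C.spanningCoe).edgeSet.ncard
      = H.edgeSet.ncard + C.spanningCoe.edgeSet.ncard := by
    rw [edgeSet_sup]
    apply Set.ncard_union_eq _ (Set.toFinite _) (Set.toFinite _)
    rw [Set.disjoint_left]
    intro e he1 he2
    induction e using Sym2.ind with
    | _ x y =>
      rw [mem_edgeSet] at he1 he2
      exact hnadj x y he1 he2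
  have hpos : 0 < C.spanningCoe.edgeSet.ncard := by
    rw [Set.ncard_pos (Set.toFinite _), hCedge]
    refine ⟨s(v, p.getVert 1), ?_⟩
    rw [Subgraph.mem_edgeSet, hC]
    have h3 := hp.three_le_length
    have := p.toSubgraph_adj_getVert (by omega : 0 < p.length)
    simpa using this
  have := hmax (H ⊔ C.spanningCoe) hH'le heven'
  omega
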